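/- arXiv:0907.0429 — 3 statements merged into one kernel-verified Lean document; each statement's English description precedes it below -/
import Mathlib

section
/- (Anderson, 1976) Let n ≥ 2, let true points (x*₁,y*₁),…,(x*ₙ,y*ₙ) lie on a line y = α* + β*x, and let observed points be xᵢ = x*ᵢ + δᵢ, yᵢ = y*ᵢ + εᵢ where δ₁,…,δₙ,ε₁,…,εₙ are i.i.d. normal random variables with mean 0 and variance σ² > 0. Define the orthogonal-regression slope estimate β̂ = (s_yy − s_xx + √((s_yy−s_xx)² + 4s_xy²))/(2 s_xy) on the event s_xy ≠ 0 (and arbitrarily, say β̂ = 0, on the null event s_xy = 0). Then E(|β̂|) = ∞. -/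
open MeasureTheory ProbabilityTheory
open scoped ENNReal NNReal
set_option maxHeartbeats 1000000

lemma gauss_Ioc_lower (v : NNReal) (hv : v ≠ 0) {Bd a b : ℝ} (hab : a ≤ b)
    (ha : -Bd ≤ a) (hb : b ≤ Bd) :
    ENNReal.ofReal ((b - a) * gaussianPDFReal 0 v Bd) ≤ gaussianReal 0 v (Set.Ioc a b) := by
  have hv' : (0:ℝ) < v := by exact_mod_cast (show (0:NNReal) ≤ v from zero_le).lt_of_ne (Ne.symm hv)
  rw [gaussianReal_apply 0 hv]
  have hpt : ∀ x ∈ Set.Ioc a b,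
      ENNReal.ofReal (gaussianPDFReal 0 v Bd) ≤ gaussianPDF 0 v x := by
    intro x hx
    rw [gaussianPDF]
    apply ENNReal.ofReal_le_ofReal
    unfold gaussianPDFReal
    have hx2 : (x - 0) ^ 2 ≤ (Bd - 0) ^ 2 := by
      simp only [sub_zero]
      exact sq_le_sq' (le_trans ha hx.1.le) (le_trans hx.2 hb)
    have h2v : (0:ℝ) < 2 * v := by positivity
    apply mul_le_mul_of_nonneg_left _ (by positivity)
    apply Real.exp_le_exp.mpr
    rw [div_le_div_iff_of_pos_right h2v]
    linarith
  calc ENNReal.ofReal ((b - a) * gaussianPDFReal 0 v Bd)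
      = ENNReal.ofReal (gaussianPDFReal 0 v Bd) * volume (Set.Ioc a b) := by
        rw [Real.volume_Ioc, ← ENNReal.ofReal_mul (gaussianPDFReal_nonneg 0 v Bd), mul_comm]
    _ = ∫⁻ _ in Set.Ioc a b, ENNReal.ofReal (gaussianPDFReal 0 v Bd) :=
        (setLIntegral_const _ _).symm
    _ ≤ ∫⁻ x in Set.Ioc a b, gaussianPDF 0 v x :=
        setLIntegral_mono ((measurable_gaussianPDFReal 0 v).ennreal_ofReal) hpt

lemma gauss_Icc_pos (v : NNReal) (hv : v ≠ 0) {a b : ℝ} (h : a < b) :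
    0 < gaussianReal 0 v (Set.Icc a b) := by
  have h1 : -(max |a| |b|) ≤ a := by
    have := neg_abs_le a
    have : -(max |a| |b|) ≤ -|a| := neg_le_neg (le_max_left _ _)
    linarith [neg_abs_le a]
  have h2 : b ≤ max |a| |b| := le_trans (le_abs_self b) (le_max_right _ _)
  calc (0:ℝ≥0∞) < ENNReal.ofReal ((b - a) * gaussianPDFReal 0 v (max |a| |b|)) := by
        apply ENNReal.ofReal_pos.mpr
        exact mul_pos (by linarith) (gaussianPDFReal_pos _ _ _ hv)
    _ ≤ gaussianReal 0 v (Set.Ioc a b) := gauss_Ioc_lower v hv h.le h1 h2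
    _ ≤ gaussianReal 0 v (Set.Icc a b) := measure_mono Set.Ioc_subset_Icc_self

lemma sum_sq_dev_le {n : ℕ} (hn : (n:ℝ) ≠ 0) (f : Fin n → ℝ) :
    ∑ i, (f i - (∑ j, f j)/n)^2 ≤ ∑ i, (f i)^2 := by
  set c := (∑ j, f j)/(n:ℝ) with hcdef
  have hc : (n : ℝ) * c = ∑ j, f j := by rw [hcdef]; field_simp
  have key : ∑ i, (f i - c)^2 + (n:ℝ)*c^2 = ∑ i, (f i)^2 := by
    have h1 : ∀ i ∈ Finset.univ, (f i - c)^2 = (f i)^2 - 2*c*(f i) + c^2 := fun i _ => by ring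
    rw [Finset.sum_congr rfl h1, Finset.sum_add_distrib, Finset.sum_sub_distrib,
      Finset.sum_const, Finset.card_univ, Fintype.card_fin, ← Finset.mul_sum, ← hc]
    ring
  nlinarith [sq_nonneg c, mul_nonneg (Nat.cast_nonneg n : (0:ℝ) ≤ n) (sq_nonneg c)]


lemma core_bound {Ω α : Type*} [MeasurableSpace Ω] [MeasurableSpace α]
    (μ : Measure Ω) [IsProbabilityMeasure μ]
    (X : Ω → ℝ) (V : Ω → α) (hX : Measurable X) (hV : Measurable V)
    (hXV : IndepFun X V μ) (v : NNReal) (hv : v ≠ 0)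
    (hlawX : μ.map X = gaussianReal 0 v)
    (W R : α → ℝ) (hW : Measurable W) (hR : Measurable R)
    (K : Set α) (hK : MeasurableSet K)
    (L U B : ℝ) (hL : 1 ≤ L) (hU : 0 < U)
    (hWK : ∀ a ∈ K, L ≤ W a ∧ W a ≤ U ∧ |R a| ≤ B * L - 1)
    (t : ℝ) (ht0 : 0 < t) (ht1 : t ≤ 1) :
    ENNReal.ofReal (t / (2*U) * gaussianPDFReal 0 v B) * μ (V ⁻¹' K)
      ≤ μ ({ω | W (V ω) * X ω + R (V ω) ∈ Set.Ioc (t/2) t} ∩ V ⁻¹' K) := by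
  set ν := μ.map V with hν
  haveI : IsProbabilityMeasure ν := Measure.isProbabilityMeasure_map hV.aemeasurable
  have hmap : μ.map (fun ω => (X ω, V ω)) = (gaussianReal 0 v).prod ν := by
    rw [← hlawX]
    exact (indepFun_iff_map_prod_eq_prod_map_map hX.aemeasurable hV.aemeasurable).mp hXV
  set S : Set (ℝ × α) :=
    {p : ℝ × α | W p.2 * p.1 + R p.2 ∈ Set.Ioc (t/2) t} ∩ (Prod.snd ⁻¹' K) with hS
  have hSmeas : MeasurableSet S := by
    apply MeasurableSet.inter
    · exact ((hW.comp measurable_snd).mul measurable_fst |>.add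
        (hR.comp measurable_snd)) measurableSet_Ioc
    · exact measurable_snd hK
  have hpre : {ω | W (V ω) * X ω + R (V ω) ∈ Set.Ioc (t/2) t} ∩ V ⁻¹' K
      = (fun ω => (X ω, V ω)) ⁻¹' S := rfl
  rw [hpre, ← Measure.map_apply (hX.prodMk hV) hSmeas, hmap,
    Measure.prod_apply_symm hSmeas]
  have hslice : ∀ a ∈ K,
      ENNReal.ofReal (t / (2*U) * gaussianPDFReal 0 v B)
        ≤ gaussianReal 0 v ((fun x => (x, a)) ⁻¹' S) := by
    intro a ha
    obtain ⟨hL', hU', hR'⟩ := hWK a ha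
    have hW0 : 0 < W a := lt_of_lt_of_le (by linarith) hL'
    have hBL : (0:ℝ) ≤ B * L - 1 := le_trans (abs_nonneg _) hR'
    have hsl : (fun x => (x, a)) ⁻¹' S
        = Set.Ioc ((t/2 - R a)/(W a)) ((t - R a)/(W a)) := by
      ext u
      simp only [hS, Set.mem_preimage, Set.mem_inter_iff, Set.mem_setOf_eq, Set.mem_Ioc, ha,
        and_true]
      constructor
      · rintro ⟨h1, h2⟩
        constructor
        · rw [div_lt_iff₀ hW0]; nlinarith
        · rw [le_div_iff₀ hW0]; nlinarith
      · rintro ⟨h1, h2⟩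
        rw [div_lt_iff₀ hW0] at h1
        rw [le_div_iff₀ hW0] at h2
        constructor <;> nlinarith
    rw [hsl]
    have hend1 : -B ≤ (t/2 - R a)/(W a) := by
      rw [neg_le, ← neg_div, div_le_iff₀ hW0]
      have h1 : R a ≤ B * L - 1 := (abs_le.mp hR').2
      nlinarith
    have hend2 : (t - R a)/(W a) ≤ B := by
      rw [div_le_iff₀ hW0]
      have h1 : -(B * L - 1) ≤ R a := (abs_le.mp hR').1
      nlinarith
    have hlen : t / (2*U) ≤ (t - R a)/(W a) - (t/2 - R a)/(W a) := by
      rw [div_sub_div_same]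
      have : t - R a - (t/2 - R a) = t/2 := by ring
      rw [this]
      rw [div_le_div_iff₀ (by linarith) hW0]
      nlinarith
    have hord : (t/2 - R a)/(W a) ≤ (t - R a)/(W a) :=
      (div_le_div_iff_of_pos_right hW0).mpr (by linarith)
    calc ENNReal.ofReal (t / (2*U) * gaussianPDFReal 0 v B)
        ≤ ENNReal.ofReal (((t - R a)/(W a) - (t/2 - R a)/(W a)) * gaussianPDFReal 0 v B) := by
          apply ENNReal.ofReal_le_ofReal
          exact mul_le_mul_of_nonneg_right hlen (gaussianPDFReal_nonneg _ _ _)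
      _ ≤ gaussianReal 0 v (Set.Ioc ((t/2 - R a)/(W a)) ((t - R a)/(W a))) :=
          gauss_Ioc_lower v hv hord hend1 hend2
  calc ENNReal.ofReal (t / (2*U) * gaussianPDFReal 0 v B) * μ (V ⁻¹' K)
      = ENNReal.ofReal (t / (2*U) * gaussianPDFReal 0 v B) * ν K := by
        rw [hν, Measure.map_apply hV hK]
    _ = ∫⁻ a in K, ENNReal.ofReal (t / (2*U) * gaussianPDFReal 0 v B) ∂ν := by
        rw [setLIntegral_const]
    _ = ∫⁻ a, K.indicator (fun _ => ENNReal.ofReal (t / (2*U) * gaussianPDFReal 0 v B)) a ∂ν := by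
        rw [lintegral_indicator hK]
    _ ≤ ∫⁻ a, gaussianReal 0 v ((fun x => (x, a)) ⁻¹' S) ∂ν := by
        apply lintegral_mono
        intro a
        by_cases ha : a ∈ K
        · rw [Set.indicator_of_mem ha]; exact hslice a ha
        · rw [Set.indicator_of_notMem ha]; exact zero_le


/-- **Anderson (1976): the orthogonal-regression slope estimate has no moments.**
True points lie on a line `y = α* + β* x`; the observed points are the true points perturbed
by `2n` i.i.d. `N(0, σ²)` errors. The orthogonal (maximum likelihood) slope estimate
`β̂ = (s_yy − s_xx + √((s_yy − s_xx)² + 4 s_xy²)) / (2 s_xy)` (set to `0` on the null event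
`s_xy = 0`) satisfies `E|β̂| = ∞`. -/
theorem anderson_slope_estimate_has_no_moments
    {Ω : Type*} [MeasurableSpace Ω] (μ : Measure Ω) [IsProbabilityMeasure μ]
    (n : ℕ) (hn : 2 ≤ n)
    -- the true points, lying on the true line y = α* + β* x
    (αs βs : ℝ) (xs ys : Fin n → ℝ) (htrue : ∀ i, ys i = αs + βs * xs i)
    -- the errors: δ₁,…,δₙ,ε₁,…,εₙ i.i.d. normal, mean 0, variance σ² > 0
    (σ2 : NNReal) (hσ2 : 0 < σ2)
    (e : Fin n ⊕ Fin n → Ω → ℝ) (hemeas : ∀ j, Measurable (e j))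
    (hindep : iIndepFun e μ)
    (hlaw : ∀ j, Measure.map (e j) μ = gaussianReal 0 σ2)
    -- the observed points
    (x y : Fin n → Ω → ℝ)
    (hx : ∀ i ω, x i ω = xs i + e (Sum.inl i) ω)
    (hy : ∀ i ω, y i ω = ys i + e (Sum.inr i) ω)
    -- sample means and scatter statistics
    (xbar ybar sxx syy sxy : Ω → ℝ)
    (hxbar : ∀ ω, xbar ω = (∑ i, x i ω) / n)
    (hybar : ∀ ω, ybar ω = (∑ i, y i ω) / n)
    (hsxx : ∀ ω, sxx ω = ∑ i, (x i ω - xbar ω) ^ 2)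
    (hsyy : ∀ ω, syy ω = ∑ i, (y i ω - ybar ω) ^ 2)
    (hsxy : ∀ ω, sxy ω = ∑ i, (x i ω - xbar ω) * (y i ω - ybar ω))
    -- the orthogonal-regression slope estimate
    (βhat : Ω → ℝ)
    (hβhat : ∀ ω, βhat ω =
      if sxy ω ≠ 0 then
        (syy ω - sxx ω + Real.sqrt ((syy ω - sxx ω) ^ 2 + 4 * sxy ω ^ 2)) / (2 * sxy ω)
      else 0) :
    (∫⁻ ω, ENNReal.ofReal |βhat ω| ∂μ) = ⊤ := by
  classical
  have hn0 : (0:ℝ) < (n:ℝ) := by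
    have : (0:ℕ) < n := by omega
    exact_mod_cast this
  have hnR : (n:ℝ) ≠ 0 := ne_of_gt hn0
  have hn2 : (2:ℝ) ≤ (n:ℝ) := by exact_mod_cast hn
  have hσ2' : σ2 ≠ 0 := ne_of_gt hσ2
  obtain ⟨i0, hi0⟩ : ∃ i : Fin n, i = ⟨0, by omega⟩ := ⟨_, rfl⟩
  obtain ⟨j0, hj0⟩ : ∃ j : Fin n ⊕ Fin n, j = Sum.inl i0 := ⟨_, rfl⟩
  -- measurability of basic statistics
  have hxm : ∀ i, Measurable (x i) := fun i => by
    have hxe : x i = fun ω => xs i + e (Sum.inl i) ω := funext (hx i)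
    rw [hxe]; exact measurable_const.add (hemeas _)
  have hym : ∀ i, Measurable (y i) := fun i => by
    have hye : y i = fun ω => ys i + e (Sum.inr i) ω := funext (hy i)
    rw [hye]; exact measurable_const.add (hemeas _)
  have hxbarm : Measurable xbar := by
    have h : xbar = fun ω => (∑ i, x i ω)/(n:ℝ) := funext hxbar
    rw [h]; exact (Finset.measurable_sum _ fun i _ => hxm i).div_const _
  have hybarm : Measurable ybar := by
    have h : ybar = fun ω => (∑ i, y i ω)/(n:ℝ) := funext hybar
    rw [h]; exact (Finset.measurable_sum _ fun i _ => hym i).div_const _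
  have hsxym : Measurable sxy := by
    have h : sxy = fun ω => ∑ i, (x i ω - xbar ω) * (y i ω - ybar ω) := funext hsxy
    rw [h]
    exact Finset.measurable_sum _ fun i _ => ((hxm i).sub hxbarm).mul ((hym i).sub hybarm)
  -- constants
  obtain ⟨Sx, hSxdef⟩ : ∃ a : ℝ, a = ∑ i, |xs i| := ⟨_, rfl⟩
  obtain ⟨Sy, hSydef⟩ : ∃ a : ℝ, a = ∑ i, |ys i| := ⟨_, rfl⟩
  obtain ⟨yb, hybdef⟩ : ∃ a : ℝ, a = (∑ i, ys i)/(n:ℝ) := ⟨_, rfl⟩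
  obtain ⟨c0, hc0def⟩ : ∃ a : ℝ, a = ys i0 - yb := ⟨_, rfl⟩
  obtain ⟨F, hFdef⟩ : ∃ a : ℝ, a = Sy + |yb| + |c0| + 2 := ⟨_, rfl⟩
  obtain ⟨Ed, hEddef⟩ : ∃ a : ℝ, a = Sx + n + 1 := ⟨_, rfl⟩
  obtain ⟨Bc, hBcdef⟩ : ∃ a : ℝ, a = 4 * Ed := ⟨_, rfl⟩
  obtain ⟨Cx, hCxdef⟩ : ∃ a : ℝ, a = ∑ i, (|xs i| + Bc)^2 := ⟨_, rfl⟩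
  obtain ⟨T, hTdef⟩ : ∃ a : ℝ, a = 5*F + 5 + 2*(Cx + 2 + F) + 4 := ⟨_, rfl⟩
  obtain ⟨L, hLdef⟩ : ∃ a : ℝ, a = c0 + T/2 - 1 := ⟨_, rfl⟩
  obtain ⟨U, hUdef⟩ : ∃ a : ℝ, a = |c0| + T + 1 := ⟨_, rfl⟩
  obtain ⟨M, hMdef⟩ : ∃ a : ℝ, a = (Sx + n) * (Sy + |yb| + T + 1) := ⟨_, rfl⟩
  have hSx0 : 0 ≤ Sx := hSxdef ▸ Finset.sum_nonneg fun i _ => abs_nonneg _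
  have hSy0 : 0 ≤ Sy := hSydef ▸ Finset.sum_nonneg fun i _ => abs_nonneg _
  have hCx0 : 0 ≤ Cx := hCxdef ▸ Finset.sum_nonneg fun i _ => sq_nonneg _
  have habs : |c0| ≤ F - 2 := by rw [hFdef]; linarith [abs_nonneg yb, hSy0]
  have hF2 : 2 ≤ F := by rw [hFdef]; linarith [abs_nonneg yb, abs_nonneg c0, hSy0]
  have hT0 : 0 ≤ T := by rw [hTdef]; linarith
  have hEd1 : 1 ≤ Ed := by rw [hEddef]; linarith
  have hBc1 : 1 ≤ Bc := by rw [hBcdef]; linarith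
  have hL1 : 1 ≤ L := by
    rw [hLdef, hTdef]; linarith [neg_abs_le c0]
  have hLCx : Cx + 1 ≤ L := by
    rw [hLdef, hTdef]; linarith [neg_abs_le c0]
  have hLsq : Cx + 1 ≤ L^2 := by nlinarith
  have hU0 : 0 < U := by rw [hUdef]; linarith [abs_nonneg c0]
  have hMB : 1 + M ≤ Bc * L := by
    have e1 : Sy + |yb| + T + 1 ≤ F + T - 1 := by rw [hFdef]; linarith [abs_nonneg c0]
    have e2 : M ≤ (Sx + n) * (F + T - 1) := by
      rw [hMdef]; exact mul_le_mul_of_nonneg_left e1 (by linarith)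
    have e3 : (Sx + n) * (F + T - 1) + 1 ≤ Ed * (F + T) := by
      rw [hEddef]; nlinarith
    have e4 : Ed * (F + T) ≤ Ed * (2*T - 4 - 4*F) :=
      mul_le_mul_of_nonneg_left (by rw [hTdef]; linarith) (by linarith)
    have e5 : Ed * (2*T - 4 - 4*F) ≤ Bc * L := by
      rw [hBcdef, hLdef]
      have h6 : 0 ≤ c0 + F := by linarith [neg_abs_le c0]
      nlinarith [mul_nonneg (by linarith : (0:ℝ) ≤ Ed) h6]
    linarith
  -- the index sets
  obtain ⟨A, hAl, hAr⟩ : ∃ A : (Fin n ⊕ Fin n) → Set ℝ,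
      (∀ i, A (Sum.inl i) = if i = i0 then Set.univ else Set.Icc (-1:ℝ) 1) ∧
      (∀ i, A (Sum.inr i) = if i = i0 then Set.Icc T (T+1) else Set.Icc (0:ℝ) 1) :=
    ⟨Sum.elim (fun i => if i = i0 then Set.univ else Set.Icc (-1:ℝ) 1)
      (fun i => if i = i0 then Set.Icc T (T+1) else Set.Icc (0:ℝ) 1), fun _ => rfl, fun _ => rfl⟩
  have hAmeas : ∀ j, MeasurableSet (A j) := by
    rintro (i | i)
    · rw [hAl i]; split
      · exact MeasurableSet.univ
      · exact measurableSet_Icc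
    · rw [hAr i]; split <;> exact measurableSet_Icc
  obtain ⟨Tf, hTfdef⟩ : ∃ S : Finset (Fin n ⊕ Fin n), S = {j0}ᶜ := ⟨_, rfl⟩
  have hmemTf : ∀ j, j ∈ Tf ↔ j ≠ j0 := by intro j; rw [hTfdef]; simp
  have memr : ∀ i : Fin n, Sum.inr i ∈ Tf := fun i => (hmemTf _).mpr (by rw [hj0]; simp)
  have meml : ∀ i : Fin n, i ≠ i0 → Sum.inl i ∈ Tf := fun i hi =>
    (hmemTf _).mpr (by rw [hj0]; simp [hi])
  obtain ⟨mr, hmr⟩ : ∃ g : Fin n → {j // j ∈ Tf}, ∀ i, (g i).1 = Sum.inr i :=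
    ⟨fun i => ⟨Sum.inr i, memr i⟩, fun i => rfl⟩
  obtain ⟨ml, hml⟩ : ∃ g : Fin n → {j // j ∈ Tf}, ∀ i, i ≠ i0 → (g i).1 = Sum.inl i :=
    ⟨fun i => if h : i = i0 then ⟨Sum.inr i, memr i⟩ else ⟨Sum.inl i, meml i h⟩,
     fun i h => by simp [h]⟩
  obtain ⟨P, hP⟩ : ∃ g : Ω → ({j // j ∈ Tf} → ℝ), g = fun ω j => e j.1 ω := ⟨_, rfl⟩
  obtain ⟨wf, hwfdef⟩ : ∃ g : ({j // j ∈ Tf} → ℝ) → ℝ,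
      g = fun v => (ys i0 + v (mr i0)) - (∑ i, (ys i + v (mr i)))/(n:ℝ) := ⟨_, rfl⟩
  obtain ⟨Rf, hRfdef⟩ : ∃ g : ({j // j ∈ Tf} → ℝ) → ℝ,
      g = fun v => ∑ i, (xs i + (if i = i0 then 0 else v (ml i))) *
        ((ys i + v (mr i)) - (∑ l, (ys l + v (mr l)))/(n:ℝ)) := ⟨_, rfl⟩
  obtain ⟨K', hK'def⟩ : ∃ K : Set ({j // j ∈ Tf} → ℝ), K = {v | ∀ j, v j ∈ A j.1} := ⟨_, rfl⟩
  have hPm : Measurable P := by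
    rw [hP]; exact measurable_pi_lambda _ fun j => hemeas j.1
  have hwfm : Measurable wf := by
    rw [hwfdef]
    apply Measurable.sub
    · exact measurable_const.add (measurable_pi_apply _)
    · apply Measurable.div_const
      apply Finset.measurable_sum
      intro i _
      exact measurable_const.add (measurable_pi_apply _)
  have hRfm : Measurable Rf := by
    rw [hRfdef]
    apply Finset.measurable_sum
    intro i _
    apply Measurable.mul
    · apply Measurable.add measurable_const
      by_cases hi : i = i0
      · simp only [if_pos hi]; exact measurable_const
      · simp only [if_neg hi]; exact measurable_pi_apply _
    · apply Measurable.sub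
      · exact measurable_const.add (measurable_pi_apply _)
      · apply Measurable.div_const
        apply Finset.measurable_sum
        intro l _
        exact measurable_const.add (measurable_pi_apply _)
  have hK'm : MeasurableSet K' := by
    rw [hK'def, show {v : {j // j ∈ Tf} → ℝ | ∀ j, v j ∈ A j.1}
        = Set.pi Set.univ (fun j => A j.1) from by ext v; simp [Set.mem_pi]]
    exact MeasurableSet.univ_pi fun j => hAmeas j.1
  -- independence
  have hindXP : IndepFun (e j0) P μ := by
    have h := hindep.indepFun_finset {j0} Tf
      (by rw [hTfdef]; exact disjoint_compl_right) hemeas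
    have hφ : Measurable (fun g : ({j0} : Finset (Fin n ⊕ Fin n)) → ℝ =>
        g ⟨j0, Finset.mem_singleton_self j0⟩) := measurable_pi_apply _
    have h2 := h.comp hφ measurable_id
    rw [hP]
    exact h2
  -- pointwise identities
  have hwfP : ∀ ω, wf (P ω) = y i0 ω - ybar ω := by
    intro ω
    rw [hwfdef, hP]
    simp only [hmr]
    simp only [← hy]
    rw [← hybar ω]
  have hRfP : ∀ ω, Rf (P ω) = ∑ i, (xs i + (if i = i0 then 0 else e (Sum.inl i) ω)) *
      (y i ω - ybar ω) := by
    intro ω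
    rw [hRfdef, hP]
    simp only [hmr]
    simp only [← hy]
    simp only [← hybar]
    apply Finset.sum_congr rfl
    intro i _
    by_cases hi : i = i0
    · rw [if_pos hi, if_pos hi]
    · rw [if_neg hi, if_neg hi, hml i hi]
  have hsum0 : ∀ ω, ∑ i, (y i ω - ybar ω) = 0 := by
    intro ω
    rw [Finset.sum_sub_distrib, Finset.sum_const, Finset.card_univ, Fintype.card_fin,
      hybar ω]
    rw [nsmul_eq_mul, mul_div_assoc', mul_div_cancel_left₀ _ hnR, sub_self]
  have hI : ∀ ω, sxy ω = wf (P ω) * e j0 ω + Rf (P ω) := by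
    intro ω
    have h1 : sxy ω = ∑ i, x i ω * (y i ω - ybar ω) := by
      rw [hsxy ω]
      have hh : ∀ i ∈ Finset.univ, (x i ω - xbar ω) * (y i ω - ybar ω)
          = x i ω * (y i ω - ybar ω) - xbar ω * (y i ω - ybar ω) := fun i _ => by ring
      rw [Finset.sum_congr rfl hh, Finset.sum_sub_distrib, ← Finset.mul_sum, hsum0 ω,
        mul_zero, sub_zero]
    have h4 : ∑ i, x i ω * (y i ω - ybar ω)
        = e j0 ω * (y i0 ω - ybar ω)
          + ∑ i, (xs i + (if i = i0 then 0 else e (Sum.inl i) ω)) * (y i ω - ybar ω) := by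
      have hh : ∀ i ∈ Finset.univ, x i ω * (y i ω - ybar ω)
          = (if i = i0 then e j0 ω * (y i0 ω - ybar ω) else 0)
            + (xs i + (if i = i0 then 0 else e (Sum.inl i) ω)) * (y i ω - ybar ω) := by
        intro i _
        by_cases hi : i = i0
        · subst hi
          rw [if_pos rfl, if_pos rfl, hx i ω, ← hj0]
          ring
        · rw [if_neg hi, if_neg hi, hx i ω]
          ring
      rw [Finset.sum_congr rfl hh, Finset.sum_add_distrib]
      simp [Finset.sum_ite_eq']
    rw [h1, h4, hwfP ω, hRfP ω]
    ring
  -- bounds on wf and Rf on K'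
  have hwRK : ∀ v ∈ K', L ≤ wf v ∧ wf v ≤ U ∧ |Rf v| ≤ Bc * L - 1 := by
    intro v hv
    rw [hK'def] at hv
    have hev : ∀ i : Fin n, 0 ≤ v (mr i) ∧ v (mr i) ≤ T + 1 := by
      intro i
      have h := hv (mr i)
      rw [hmr i, hAr i] at h
      by_cases hi : i = i0
      · rw [if_pos hi] at h
        exact ⟨by linarith [h.1], h.2⟩
      · rw [if_neg hi] at h
        exact ⟨h.1, by linarith [h.2]⟩
    have hev0 : T ≤ v (mr i0) ∧ v (mr i0) ≤ T + 1 := by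
      have h := hv (mr i0)
      rw [hmr i0, hAr i0, if_pos rfl] at h
      exact ⟨h.1, h.2⟩
    have hsum_lo : 0 ≤ ∑ i, v (mr i) := Finset.sum_nonneg fun i _ => (hev i).1
    have hsum_hi : ∑ i, v (mr i) ≤ T + n := by
      have h1 : ∀ i ∈ Finset.univ, v (mr i) ≤ (if i = i0 then T else 0) + 1 := by
        intro i _
        by_cases hi : i = i0
        · rw [if_pos hi, hi]; linarith [hev0.2]
        · rw [if_neg hi]
          have h := hv (mr i)
          rw [hmr i, hAr i, if_neg hi] at h
          linarith [h.2]
      calc ∑ i, v (mr i) ≤ ∑ i, ((if i = i0 then T else 0) + 1) := Finset.sum_le_sum h1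
        _ = T + n := by
          rw [Finset.sum_add_distrib, Finset.sum_ite_eq' Finset.univ i0 (fun _ => T),
            Finset.sum_const, Finset.card_univ, Fintype.card_fin]
          simp
    have hmean0 : 0 ≤ (∑ i, v (mr i))/(n:ℝ) := by positivity
    have hmean1 : (∑ i, v (mr i))/(n:ℝ) ≤ T/2 + 1 := by
      rw [div_le_iff₀ hn0]
      nlinarith
    have hwfv : wf v = c0 + v (mr i0) - (∑ i, v (mr i))/(n:ℝ) := by
      rw [hwfdef]
      simp only [Finset.sum_add_distrib]
      rw [add_div, hc0def, hybdef]
      ring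
    have hmeanT : (∑ i, v (mr i))/(n:ℝ) ≤ T + 1 := by linarith [hT0]
    refine ⟨?_, ?_, ?_⟩
    · rw [hwfv, hLdef]; linarith [hev0.1]
    · rw [hwfv, hUdef]; linarith [le_abs_self c0, hev0.2]
    · have hRfv : |Rf v| ≤ M := by
        rw [hRfdef]
        refine le_trans (Finset.abs_sum_le_sum_abs _ _) ?_
        have hterm : ∀ i ∈ Finset.univ,
            |(xs i + (if i = i0 then 0 else v (ml i))) *
              ((ys i + v (mr i)) - (∑ l, (ys l + v (mr l)))/(n:ℝ))|
            ≤ (|xs i| + 1) * (Sy + |yb| + T + 1) := by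
          intro i _
          rw [abs_mul]
          have hx1 : |xs i + (if i = i0 then 0 else v (ml i))| ≤ |xs i| + 1 := by
            refine le_trans (abs_add_le _ _) ?_
            apply add_le_add_right
            by_cases hi : i = i0
            · rw [if_pos hi]; simp
            · rw [if_neg hi]
              have h := hv (ml i)
              rw [hml i hi, hAl i, if_neg hi] at h
              exact abs_le.mpr ⟨h.1, h.2⟩
          have hy1 : |(ys i + v (mr i)) - (∑ l, (ys l + v (mr l)))/(n:ℝ)|
              ≤ Sy + |yb| + T + 1 := by
            have hsplit : (ys i + v (mr i)) - (∑ l, (ys l + v (mr l)))/(n:ℝ)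
                = (ys i - yb) + (v (mr i) - (∑ l, v (mr l))/(n:ℝ)) := by
              rw [Finset.sum_add_distrib, add_div, hybdef]
              ring
            rw [hsplit]
            have h1 : |ys i - yb| ≤ Sy + |yb| := by
              refine le_trans (abs_sub _ _) ?_
              apply add_le_add_left
              rw [hSydef]
              exact Finset.single_le_sum (fun l _ => abs_nonneg (ys l)) (Finset.mem_univ i)
            have h2 : |v (mr i) - (∑ l, v (mr l))/(n:ℝ)| ≤ T + 1 :=
              abs_le.mpr ⟨by linarith [(hev i).1, hmeanT], by linarith [(hev i).2, hmean0]⟩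
            refine le_trans (abs_add_le _ _) ?_
            linarith
          exact mul_le_mul hx1 hy1 (abs_nonneg _) (by positivity)
        refine le_trans (Finset.sum_le_sum hterm) ?_
        rw [← Finset.sum_mul, Finset.sum_add_distrib, Finset.sum_const, Finset.card_univ,
          Fintype.card_fin, ← hSxdef, hMdef]
        simp
      linarith
  -- the measure of the conditioning event
  have hiInter : P ⁻¹' K' = ⋂ j, e j ⁻¹' A j := by
    ext ω
    simp only [Set.mem_preimage, Set.mem_iInter, hK'def, Set.mem_setOf_eq, hP]
    constructor
    · intro h j
      by_cases hj : j = j0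
      · subst hj; rw [hj0, hAl i0, if_pos rfl]; trivial
      · exact h ⟨j, (hmemTf j).mpr hj⟩
    · intro h j
      exact h j.1
  have hpK : μ (P ⁻¹' K') = ∏ j, μ (e j ⁻¹' A j) := by
    rw [hiInter]
    exact hindep.meas_iInter fun j => ⟨A j, hAmeas j, rfl⟩
  have hppos : 0 < μ (P ⁻¹' K') := by
    rw [hpK]
    rw [CanonicallyOrderedAdd.prod_pos]
    intro j _
    have hfac : μ (e j ⁻¹' A j) = gaussianReal 0 σ2 (A j) := by
      rw [← hlaw j, Measure.map_apply (hemeas j) (hAmeas j)]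
    rw [hfac]
    rcases j with i | i
    · rw [hAl i]; split
      · simp
      · exact gauss_Icc_pos σ2 hσ2' (by norm_num)
    · rw [hAr i]; split
      · exact gauss_Icc_pos σ2 hσ2' (by linarith)
      · exact gauss_Icc_pos σ2 hσ2' (by norm_num)
  -- dyadic events
  obtain ⟨tk, htk⟩ : ∃ f : ℕ → ℝ, ∀ k, f k = (1/2:ℝ)^(k+1) := ⟨_, fun _ => rfl⟩
  have htk0 : ∀ k, 0 < tk k := by intro k; rw [htk]; positivity
  have htk1 : ∀ k, tk k ≤ 1 := by
    intro k; rw [htk]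
    exact pow_le_one₀ (by norm_num) (by norm_num)
  obtain ⟨Ev, hEv⟩ : ∃ E : ℕ → Set Ω,
      ∀ k, E k = {ω | sxy ω ∈ Set.Ioc (tk k/2) (tk k)} ∩ P ⁻¹' K' := ⟨_, fun _ => rfl⟩
  have hEvm : ∀ k, MeasurableSet (Ev k) := by
    intro k; rw [hEv]
    exact (hsxym measurableSet_Ioc).inter (hPm hK'm)
  have hEvlow : ∀ k,
      ENNReal.ofReal (tk k/(2*U) * gaussianPDFReal 0 σ2 Bc) * μ (P ⁻¹' K') ≤ μ (Ev k) := by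
    intro k
    have hset : Ev k = {ω | wf (P ω) * e j0 ω + Rf (P ω) ∈ Set.Ioc (tk k/2) (tk k)}
        ∩ P ⁻¹' K' := by
      rw [hEv]
      ext ω
      simp only [Set.mem_inter_iff, Set.mem_setOf_eq, Set.mem_preimage, hI ω]
    rw [hset]
    exact core_bound μ (e j0) P (hemeas j0) hPm hindXP σ2 hσ2' (hlaw j0) wf Rf hwfm hRfm
      K' hK'm L U Bc hL1 hU0 hwRK (tk k) (htk0 k) (htk1 k)
  -- lower bound for βhat on the events
  have hβ : ∀ k ω, ω ∈ Ev k → ENNReal.ofReal ((2:ℝ)^(k+1)) ≤ ENNReal.ofReal |βhat ω| := by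
    intro k ω hω
    rw [hEv] at hω
    obtain ⟨hq, hK'ω⟩ := hω
    have hq1 : tk k/2 < sxy ω := hq.1
    have hq2 : sxy ω ≤ tk k := hq.2
    have hq0 : 0 < sxy ω := lt_trans (half_pos (htk0 k)) hq1
    have hPK'ω : P ω ∈ K' := Set.mem_preimage.mp hK'ω
    have hwb := hwRK (P ω) hPK'ω
    have hL0 : (0:ℝ) < L := by linarith
    -- bound on e j0 ω
    have hδ0 : |e j0 ω| ≤ Bc := by
      have h1 : wf (P ω) * e j0 ω = sxy ω - Rf (P ω) := by rw [hI ω]; ring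
      have h2 : |wf (P ω) * e j0 ω| ≤ 1 + (Bc*L - 1) := by
        rw [h1]
        refine le_trans (abs_sub _ _) ?_
        have : |sxy ω| ≤ 1 := abs_le.mpr ⟨by linarith, by linarith [htk1 k]⟩
        linarith [hwb.2.2]
      have h3 : L * |e j0 ω| ≤ Bc * L := by
        calc L * |e j0 ω| ≤ wf (P ω) * |e j0 ω| :=
              mul_le_mul_of_nonneg_right hwb.1 (abs_nonneg _)
          _ = |wf (P ω) * e j0 ω| := by
              rw [abs_mul, abs_of_nonneg (by linarith [hwb.1] : (0:ℝ) ≤ wf (P ω))]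
          _ ≤ 1 + (Bc*L - 1) := h2
          _ = Bc * L := by ring
      nlinarith [abs_nonneg (e j0 ω)]
    -- bounds on the coordinates and sxx, syy
    have hPKall : ∀ j : {j // j ∈ Tf}, P ω j ∈ A j.1 := by
      rw [hK'def] at hPK'ω; exact hPK'ω
    have hδi : ∀ i, i ≠ i0 → |e (Sum.inl i) ω| ≤ 1 := by
      intro i hi
      have h := hPKall ⟨Sum.inl i, meml i hi⟩
      rw [hP] at h
      simp only at h
      rw [hAl i, if_neg hi] at h
      exact abs_le.mpr ⟨h.1, h.2⟩
    have hxb : ∀ i, |x i ω| ≤ |xs i| + Bc := by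
      intro i
      rw [hx i ω]
      refine le_trans (abs_add_le _ _) ?_
      apply add_le_add_right
      by_cases hi : i = i0
      · subst hi; rw [← hj0]; exact hδ0
      · exact le_trans (hδi i hi) hBc1
    have hsxxb : sxx ω ≤ Cx := by
      have h1 : sxx ω ≤ ∑ i, (x i ω)^2 := by
        rw [hsxx ω]
        have hh : ∀ i ∈ Finset.univ, (x i ω - xbar ω)^2
            = (x i ω - (∑ j, x j ω)/(n:ℝ))^2 := by
          intro i _; rw [hxbar ω]
        rw [Finset.sum_congr rfl hh]
        exact sum_sq_dev_le hnR (fun i => x i ω)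
      refine h1.trans ?_
      rw [hCxdef]
      apply Finset.sum_le_sum
      intro i _
      have h := abs_le.mp (hxb i)
      exact sq_le_sq' (by linarith) (by linarith)
    have hsyyb : L^2 ≤ syy ω := by
      rw [hsyy ω]
      calc L^2 ≤ (wf (P ω))^2 := by nlinarith [hwb.1]
        _ = (y i0 ω - ybar ω)^2 := by rw [hwfP ω]
        _ ≤ ∑ i, (y i ω - ybar ω)^2 :=
            Finset.single_le_sum (f := fun i => (y i ω - ybar ω)^2)
              (fun i _ => sq_nonneg _) (Finset.mem_univ i0)
    have hs1 : 1 ≤ syy ω - sxx ω := by linarith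
    -- βhat bound
    have hβv : βhat ω = (syy ω - sxx ω
        + Real.sqrt ((syy ω - sxx ω)^2 + 4 * sxy ω^2)) / (2 * sxy ω) := by
      rw [hβhat ω, if_pos hq0.ne']
    have hsqrt : syy ω - sxx ω ≤ Real.sqrt ((syy ω - sxx ω)^2 + 4 * sxy ω^2) := by
      calc syy ω - sxx ω = Real.sqrt ((syy ω - sxx ω)^2) :=
            (Real.sqrt_sq (by linarith)).symm
        _ ≤ _ := Real.sqrt_le_sqrt (by nlinarith [sq_nonneg (sxy ω)])
    have hfinal : (2:ℝ)^(k+1) ≤ βhat ω := by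
      rw [hβv]
      have h2q : (0:ℝ) < 2 * sxy ω := by linarith
      rw [le_div_iff₀ h2q]
      have hpow : (2:ℝ)^(k+1) * tk k = 1 := by rw [htk k, ← mul_pow]; norm_num
      have h5 : (2:ℝ)^(k+1) * sxy ω ≤ 1 := by
        calc (2:ℝ)^(k+1) * sxy ω ≤ (2:ℝ)^(k+1) * tk k :=
              mul_le_mul_of_nonneg_left hq2 (by positivity)
          _ = 1 := hpow
      nlinarith [hsqrt, hs1]
    exact ENNReal.ofReal_le_ofReal (hfinal.trans (le_abs_self _))
  -- disjointness
  have hdisj : ∀ a b : ℕ, a < b → ∀ ω', sxy ω' ∈ Set.Ioc (tk a/2) (tk a)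
      → sxy ω' ∈ Set.Ioc (tk b/2) (tk b) → False := by
    intro a b hab ω' h1 h2
    have hh : (1/2:ℝ)^(b+1) ≤ (1/2:ℝ)^(a+1) * (1/2) := by
      calc (1/2:ℝ)^(b+1) ≤ (1/2:ℝ)^(a+1+1) :=
            pow_le_pow_of_le_one (by norm_num) (by norm_num) (by omega)
        _ = (1/2:ℝ)^(a+1) * (1/2) := pow_succ _ _
    simp only [htk] at h1 h2
    have e1 : (1/2:ℝ)^(a+1)/2 < sxy ω' := h1.1
    have e2 : sxy ω' ≤ (1/2:ℝ)^(b+1) := h2.2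
    nlinarith [e1, e2, hh]
  -- final assembly
  obtain ⟨cB, hcBdef⟩ : ∃ c : ℝ≥0∞,
      c = ENNReal.ofReal (gaussianPDFReal 0 σ2 Bc/(2*U)) * μ (P ⁻¹' K') := ⟨_, rfl⟩
  have hterm : ∀ k, cB ≤ ENNReal.ofReal ((2:ℝ)^(k+1)) * μ (Ev k) := by
    intro k
    have hr : (2:ℝ)^(k+1) * (tk k/(2*U) * gaussianPDFReal 0 σ2 Bc)
        = gaussianPDFReal 0 σ2 Bc/(2*U) := by
      have hpow : (2:ℝ)^(k+1) * (1/2:ℝ)^(k+1) = 1 := by rw [← mul_pow]; norm_num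
      rw [htk k]
      calc (2:ℝ)^(k+1) * ((1/2:ℝ)^(k+1)/(2*U) * gaussianPDFReal 0 σ2 Bc)
          = ((2:ℝ)^(k+1) * (1/2:ℝ)^(k+1)) * (gaussianPDFReal 0 σ2 Bc/(2*U)) := by ring
        _ = gaussianPDFReal 0 σ2 Bc/(2*U) := by rw [hpow, one_mul]
    have h1 : cB = ENNReal.ofReal ((2:ℝ)^(k+1))
        * (ENNReal.ofReal (tk k/(2*U) * gaussianPDFReal 0 σ2 Bc) * μ (P ⁻¹' K')) := by
      rw [hcBdef, ← mul_assoc, ← ENNReal.ofReal_mul (by positivity), hr]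
    rw [h1]
    exact mul_le_mul_right (hEvlow k) _
  have hN : ∀ N : ℕ, (N : ℝ≥0∞) * cB ≤ ∫⁻ ω, ENNReal.ofReal |βhat ω| ∂μ := by
    intro N
    calc (N : ℝ≥0∞) * cB = ∑ _k ∈ Finset.range N, cB := by
          rw [Finset.sum_const, Finset.card_range, nsmul_eq_mul]
      _ ≤ ∑ k ∈ Finset.range N, ENNReal.ofReal ((2:ℝ)^(k+1)) * μ (Ev k) :=
          Finset.sum_le_sum fun k _ => hterm k
      _ = ∑ k ∈ Finset.range N,
            ∫⁻ ω, (Ev k).indicator (fun _ => ENNReal.ofReal ((2:ℝ)^(k+1))) ω ∂μ := by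
          refine Finset.sum_congr rfl fun k _ => ?_
          rw [lintegral_indicator_const (hEvm k)]
      _ = ∫⁻ ω, ∑ k ∈ Finset.range N,
            (Ev k).indicator (fun _ => ENNReal.ofReal ((2:ℝ)^(k+1))) ω ∂μ :=
          (lintegral_finset_sum _ fun k _ => measurable_const.indicator (hEvm k)).symm
      _ ≤ ∫⁻ ω, ENNReal.ofReal |βhat ω| ∂μ := by
          apply lintegral_mono
          intro ω
          show ∑ k ∈ Finset.range N,
              (Ev k).indicator (fun _ => ENNReal.ofReal ((2:ℝ)^(k+1))) ω
            ≤ ENNReal.ofReal |βhat ω|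
          by_cases hmem : ∃ k, ω ∈ Ev k
          · obtain ⟨k0, hk0⟩ := hmem
            have hz : ∀ b, b ≠ k0 →
                (Ev b).indicator (fun _ => ENNReal.ofReal ((2:ℝ)^(b+1))) ω = 0 := by
              intro b hb
              apply Set.indicator_of_notMem
              intro hbmem
              have h1 : sxy ω ∈ Set.Ioc (tk k0/2) (tk k0) := by
                rw [hEv] at hk0; exact hk0.1
              have h2 : sxy ω ∈ Set.Ioc (tk b/2) (tk b) := by
                rw [hEv] at hbmem; exact hbmem.1
              rcases lt_or_gt_of_ne hb with hlt | hlt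
              · exact hdisj b k0 hlt ω h2 h1
              · exact hdisj k0 b hlt ω h1 h2
            by_cases hk0N : k0 ∈ Finset.range N
            · rw [Finset.sum_eq_single_of_mem k0 hk0N (fun b _ hb => hz b hb),
                Set.indicator_of_mem hk0]
              exact hβ k0 ω hk0
            · rw [Finset.sum_eq_zero (fun b hbN => hz b (fun h => hk0N (h ▸ hbN)))]
              exact zero_le
          · rw [Finset.sum_eq_zero
              (fun b _ => Set.indicator_of_notMem (fun h => hmem ⟨b, h⟩) _)]
            exact zero_le
  have hcB0 : cB ≠ 0 := by
    rw [hcBdef]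
    apply mul_ne_zero
    · simp only [ne_eq, ENNReal.ofReal_eq_zero, not_le]
      have := gaussianPDFReal_pos 0 σ2 Bc hσ2'
      positivity
    · exact hppos.ne'
  rw [eq_top_iff]
  calc (⊤:ℝ≥0∞) = (⨆ N : ℕ, (N:ℝ≥0∞)) * cB := by
        rw [ENNReal.iSup_natCast, ENNReal.top_mul hcB0]
    _ = ⨆ N : ℕ, (N:ℝ≥0∞) * cB := ENNReal.iSup_mul _ _
    _ ≤ _ := iSup_le hN
end

section
/- Let x ≠ 0 and y ∈ ℝ. The three points (0,0), (0,−1), (x, 1+y) are not collinear, and their circumcenter (a,b) — the unique point equidistant from all three — satisfies b = −1/2 and a = (x² + 2 + 3y + y²)/(2x). In particular, if 0 < |x| ≤ 10⁻⁹ and |y| ≤ 10⁻⁹, then |a| ≥ 1/(3|x|). -/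
/-- For `x ≠ 0`, the three points `(0,0)`, `(0,−1)`, `(x, 1+y)` are not collinear; their
circumcenter `(a,b)` (the unique point equidistant from all three) satisfies `b = −1/2` and
`a = (x² + 2 + 3y + y²)/(2x)`; and if `0 < |x| ≤ 10⁻⁹` and `|y| ≤ 10⁻⁹` then
`|a| ≥ 1/(3|x|)`. -/
theorem circumcenter_three_points_formula (x y : ℝ) (hx : x ≠ 0) :
    ¬ Collinear ℝ ({((0 : ℝ), (0 : ℝ)), (0, -1), (x, 1 + y)} : Set (ℝ × ℝ)) ∧
    (∃! c : ℝ × ℝ,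
      c.1 ^ 2 + c.2 ^ 2 = c.1 ^ 2 + (c.2 + 1) ^ 2 ∧
      c.1 ^ 2 + c.2 ^ 2 = (c.1 - x) ^ 2 + (c.2 - (1 + y)) ^ 2) ∧
    (∀ a b : ℝ,
      a ^ 2 + b ^ 2 = a ^ 2 + (b + 1) ^ 2 →
      a ^ 2 + b ^ 2 = (a - x) ^ 2 + (b - (1 + y)) ^ 2 →
      b = -1 / 2 ∧ a = (x ^ 2 + 2 + 3 * y + y ^ 2) / (2 * x) ∧
        (|x| ≤ 1e-9 → |y| ≤ 1e-9 → 1 / (3 * |x|) ≤ |a|)) := by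
  have hforall : ∀ a b : ℝ,
      a ^ 2 + b ^ 2 = a ^ 2 + (b + 1) ^ 2 →
      a ^ 2 + b ^ 2 = (a - x) ^ 2 + (b - (1 + y)) ^ 2 →
      b = -1 / 2 ∧ a = (x ^ 2 + 2 + 3 * y + y ^ 2) / (2 * x) ∧
        (|x| ≤ 1e-9 → |y| ≤ 1e-9 → 1 / (3 * |x|) ≤ |a|) := by
    intro a b h1 h2
    have hb : b = -1 / 2 := by nlinarith [h1]
    subst hb
    have ha : a = (x ^ 2 + 2 + 3 * y + y ^ 2) / (2 * x) := by
      field_simp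
      nlinarith [h2]
    refine ⟨rfl, ha, ?_⟩
    intro hxs hys
    have hxpos : (0 : ℝ) < |x| := abs_pos.mpr hx
    have hN : (2 : ℝ) / 3 ≤ |x ^ 2 + 2 + 3 * y + y ^ 2| := by
      have hy1 : -(1e-9 : ℝ) ≤ y := by
        have := abs_le.mp hys; linarith [this.1]
      have h2 : (2:ℝ)/3 ≤ x ^ 2 + 2 + 3 * y + y ^ 2 := by nlinarith [sq_nonneg x, sq_nonneg y]
      exact h2.trans (le_abs_self _)
    rw [ha, abs_div, abs_mul, abs_two]
    rw [div_le_div_iff₀ (by positivity) (by positivity)]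
    calc 1 * (2 * |x|) = 3 * |x| * (2/3) := by ring
    _ ≤ 3 * |x| * |x ^ 2 + 2 + 3 * y + y ^ 2| := by
        exact mul_le_mul_of_nonneg_left hN (by positivity)
    _ = |x ^ 2 + 2 + 3 * y + y ^ 2| * (3 * |x|) := by ring
  refine ⟨?_, ?_, hforall⟩
  · intro hcol
    rw [collinear_iff_of_mem (Set.mem_insert _ _)] at hcol
    obtain ⟨v, hv⟩ := hcol
    obtain ⟨c, hc⟩ := hv (0, -1) (by simp)
    obtain ⟨d, hd⟩ := hv (x, 1 + y) (by simp)
    simp only [vadd_eq_add, add_zero, Prod.ext_iff, Prod.smul_fst, Prod.smul_snd,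
      smul_eq_mul, Prod.fst_add, Prod.snd_add, Prod.fst_zero, Prod.snd_zero] at hc hd
    obtain ⟨hc1, hc2⟩ := hc
    obtain ⟨hd1, hd2⟩ := hd
    have hcne : c ≠ 0 := by rintro rfl; simp at hc2
    have hv1 : v.1 = 0 := by
      field_simp at hc1
      rcases mul_eq_zero.mp hc1.symm with h | h
      · exact absurd h hcne
      · exact h
    exact hx (by rw [hd1, hv1, mul_zero])
  · refine ⟨((x ^ 2 + 2 + 3 * y + y ^ 2) / (2 * x), -1/2), ⟨by ring, ?_⟩, ?_⟩
    · simp only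
      field_simp
      ring
    · rintro ⟨a, b⟩ ⟨h1, h2⟩
      obtain ⟨hb, ha, -⟩ := hforall a b h1 h2
      simp [ha, hb]
end

section
/- Let n ≥ 3 and let (x₁,y₁),…,(xₙ,yₙ) ∈ ℝ² be n distinct points lying on a common line. Then the geometric circle-fit objective F(a,b,R) = Σ_{i=1}^n [√((xᵢ−a)²+(yᵢ−b)²) − R]² satisfies F(a,b,R) > 0 for every (a,b) ∈ ℝ² and R > 0, while inf over (a,b) ∈ ℝ², R > 0 of F(a,b,R) = 0; consequently F attains no global minimum over circles. -/
private lemma sqrt_sub_sq_le (t m : ℝ) (hm : 0 < m) :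
    (Real.sqrt (t ^ 2 + m ^ 2) - m) ^ 2 ≤ t ^ 4 / (4 * m ^ 2) := by
  have h1 : m ≤ Real.sqrt (t ^ 2 + m ^ 2) := by
    rw [show m = Real.sqrt (m ^ 2) from (Real.sqrt_sq hm.le).symm]
    exact Real.sqrt_le_sqrt (by nlinarith [sq_nonneg t, Real.sq_sqrt (sq_nonneg m)])
  have h2 : Real.sqrt (t ^ 2 + m ^ 2) ≤ m + t ^ 2 / (2 * m) := by
    rw [show m + t ^ 2 / (2 * m) = Real.sqrt ((m + t ^ 2 / (2 * m)) ^ 2) from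
      (Real.sqrt_sq (by positivity)).symm]
    apply Real.sqrt_le_sqrt
    have : (m + t ^ 2 / (2 * m)) ^ 2 - (t ^ 2 + m ^ 2) = t ^ 4 / (4 * m ^ 2) := by
      field_simp; ring
    have h4 : 0 ≤ t ^ 4 / (4 * m ^ 2) := by positivity
    linarith
  have h3 : 0 ≤ Real.sqrt (t ^ 2 + m ^ 2) - m := by linarith
  have h4 : Real.sqrt (t ^ 2 + m ^ 2) - m ≤ t ^ 2 / (2 * m) := by linarith
  have := mul_self_le_mul_self h3 h4
  have he : t ^ 2 / (2 * m) * (t ^ 2 / (2 * m)) = t ^ 4 / (4 * m ^ 2) := by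
    field_simp; ring
  nlinarith [this]

/-- For `n ≥ 3` distinct collinear data points, the geometric circle-fit objective
`F(a,b,R) = ∑ i, (√((xᵢ−a)² + (yᵢ−b)²) − R)²` is strictly positive for every circle, yet its
infimum over all circles is `0`; consequently `F` attains no global minimum over circles. -/
theorem circleFit_collinear_no_minimum
    (n : ℕ) (hn : 3 ≤ n) (p : Fin n → ℝ × ℝ)
    (hdist : Function.Injective p) (hcol : Collinear ℝ (Set.range p))
    (F : ℝ → ℝ → ℝ → ℝ)
    (hF : ∀ a b R, F a b R =
      ∑ i, (Real.sqrt (((p i).1 - a) ^ 2 + ((p i).2 - b) ^ 2) - R) ^ 2) :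
    (∀ a b R : ℝ, 0 < R → 0 < F a b R) ∧
    IsGLB {s : ℝ | ∃ a b R : ℝ, 0 < R ∧ F a b R = s} 0 ∧
    ¬ ∃ a b R : ℝ, 0 < R ∧ ∀ a' b' R' : ℝ, 0 < R' → F a b R ≤ F a' b' R' := by
  -- indices
  set i0 : Fin n := ⟨0, by omega⟩
  set i1 : Fin n := ⟨1, by omega⟩
  set i2 : Fin n := ⟨2, by omega⟩
  -- collinear structure
  have hmem : p i0 ∈ Set.range p := ⟨i0, rfl⟩
  rw [collinear_iff_of_mem hmem] at hcol
  obtain ⟨d, hd⟩ := hcol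
  have hf : ∀ i : Fin n, ∃ r : ℝ, p i = r • d + p i0 := fun i => hd (p i) ⟨i, rfl⟩
  choose f hpf using hf
  have hdne : d ≠ 0 := by
    intro h
    apply hdist.ne (show i0 ≠ i1 by simp [i0, i1, Fin.ext_iff])
    rw [hpf i0, hpf i1, h, smul_zero, smul_zero]
  have hs2 : 0 < d.1 ^ 2 + d.2 ^ 2 := by
    have : d.1 ≠ 0 ∨ d.2 ≠ 0 := by
      by_contra hc; push_neg at hc
      exact hdne (Prod.ext hc.1 hc.2)
    rcases this with h | h <;> positivity
  have hfinj : ∀ i j : Fin n, f i = f j → i = j := by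
    intro i j hij
    apply hdist
    rw [hpf i, hpf j, hij]
  have hp1 : ∀ i : Fin n, (p i).1 = f i * d.1 + (p i0).1 := by
    intro i; rw [hpf i]; simp [Prod.smul_def]
  have hp2 : ∀ i : Fin n, (p i).2 = f i * d.2 + (p i0).2 := by
    intro i; rw [hpf i]; simp [Prod.smul_def]
  -- positivity
  have hpos : ∀ a b R : ℝ, 0 < R → 0 < F a b R := by
    intro a b R hR
    rw [hF]
    have hnn : ∀ i ∈ Finset.univ (α := Fin n),
        (0:ℝ) ≤ (Real.sqrt (((p i).1 - a) ^ 2 + ((p i).2 - b) ^ 2) - R) ^ 2 :=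
      fun i _ => sq_nonneg _
    rcases (Finset.sum_nonneg hnn).lt_or_eq with h | h
    · exact h
    exfalso
    have hall := (Finset.sum_eq_zero_iff_of_nonneg hnn).1 h.symm
    have hsq : ∀ i : Fin n, ((p i).1 - a) ^ 2 + ((p i).2 - b) ^ 2 = R ^ 2 := by
      intro i
      have h0 := hall i (Finset.mem_univ i)
      have h1 : Real.sqrt (((p i).1 - a) ^ 2 + ((p i).2 - b) ^ 2) = R := by
        have := pow_eq_zero_iff (n := 2) (by norm_num) |>.1 h0
        linarith [this]
      rw [← h1, Real.sq_sqrt (by positivity)]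
    set X := (p i0).1 - a with hX
    set Y := (p i0).2 - b with hY
    have key : ∀ i : Fin n,
        (f i * d.1 + X) ^ 2 + (f i * d.2 + Y) ^ 2 = R ^ 2 := by
      intro i
      have := hsq i
      rw [hp1 i, hp2 i] at this
      convert this using 2 <;> ring
    have e0 := key i0
    have e1 := key i1
    have e2 := key i2
    have hne01 : f i1 ≠ f i0 := fun h => by
      have := hfinj _ _ h; simp [i0, i1, Fin.ext_iff] at this
    have hne02 : f i2 ≠ f i0 := fun h => by
      have := hfinj _ _ h; simp [i0, i2, Fin.ext_iff] at this
    have hne12 : f i1 ≠ f i2 := fun h => by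
      have := hfinj _ _ h; simp [i1, i2, Fin.ext_iff] at this
    have h01 : (f i1 - f i0) * (2 * (X * d.1 + Y * d.2) + (f i1 + f i0) * (d.1 ^ 2 + d.2 ^ 2)) = 0 := by
      linear_combination e1 - e0
    have h02 : (f i2 - f i0) * (2 * (X * d.1 + Y * d.2) + (f i2 + f i0) * (d.1 ^ 2 + d.2 ^ 2)) = 0 := by
      linear_combination e2 - e0
    have g1 : 2 * (X * d.1 + Y * d.2) + (f i1 + f i0) * (d.1 ^ 2 + d.2 ^ 2) = 0 :=
      by rcases mul_eq_zero.1 h01 with h | h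
         · exact absurd (sub_eq_zero.1 h) hne01
         · exact h
    have g2 : 2 * (X * d.1 + Y * d.2) + (f i2 + f i0) * (d.1 ^ 2 + d.2 ^ 2) = 0 :=
      by rcases mul_eq_zero.1 h02 with h | h
         · exact absurd (sub_eq_zero.1 h) hne02
         · exact h
    have : (f i1 - f i2) * (d.1 ^ 2 + d.2 ^ 2) = 0 := by linear_combination g1 - g2
    rcases mul_eq_zero.1 this with h | h
    · exact hne12 (sub_eq_zero.1 h)
    · linarith
  -- small values
  set S := {s : ℝ | ∃ a b R : ℝ, 0 < R ∧ F a b R = s} with hS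
  have hsmall : ∀ ε : ℝ, 0 < ε → ∃ s ∈ S, s < ε := by
    intro ε hε
    set B : ℝ := (∑ i : Fin n, (d.1 ^ 2 + d.2 ^ 2) * f i ^ 4 / 4) + 1 with hB
    have hBpos : 0 < B := by
      have : ∀ i ∈ Finset.univ (α := Fin n),
          (0:ℝ) ≤ (d.1 ^ 2 + d.2 ^ 2) * f i ^ 4 / 4 := fun i _ => by positivity
      have h := Finset.sum_nonneg this
      rw [hB]
      linarith
    set m : ℝ := max 1 (B / ε + 1) with hm
    have hm1 : (1:ℝ) ≤ m := le_max_left _ _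
    have hmpos : 0 < m := lt_of_lt_of_le one_pos hm1
    have hmB : B / ε < m := lt_of_lt_of_le (by linarith) (le_max_right _ _)
    set a : ℝ := (p i0).1 - m * d.2
    set b : ℝ := (p i0).2 + m * d.1
    set R : ℝ := m * Real.sqrt (d.1 ^ 2 + d.2 ^ 2) with hRdef
    have hRpos : 0 < R := by
      apply mul_pos hmpos (Real.sqrt_pos.2 hs2)
    refine ⟨F a b R, ⟨a, b, R, hRpos, rfl⟩, ?_⟩
    rw [hF]
    have hterm : ∀ i : Fin n,
        (Real.sqrt (((p i).1 - a) ^ 2 + ((p i).2 - b) ^ 2) - R) ^ 2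
          ≤ (d.1 ^ 2 + d.2 ^ 2) * (f i ^ 4 / (4 * m ^ 2)) := by
      intro i
      have harg : ((p i).1 - a) ^ 2 + ((p i).2 - b) ^ 2
          = (f i ^ 2 + m ^ 2) * (d.1 ^ 2 + d.2 ^ 2) := by
        rw [hp1 i, hp2 i]
        simp only [a, b]
        ring
      rw [harg, Real.sqrt_mul (by positivity)]
      have : Real.sqrt (f i ^ 2 + m ^ 2) * Real.sqrt (d.1 ^ 2 + d.2 ^ 2) - R
          = (Real.sqrt (f i ^ 2 + m ^ 2) - m) * Real.sqrt (d.1 ^ 2 + d.2 ^ 2) := by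
        rw [hRdef]; ring
      rw [this, mul_pow, Real.sq_sqrt hs2.le, mul_comm]
      exact mul_le_mul_of_nonneg_left (sqrt_sub_sq_le (f i) m hmpos) hs2.le
    calc ∑ i : Fin n, (Real.sqrt (((p i).1 - a) ^ 2 + ((p i).2 - b) ^ 2) - R) ^ 2
        ≤ ∑ i : Fin n, (d.1 ^ 2 + d.2 ^ 2) * (f i ^ 4 / (4 * m ^ 2)) :=
          Finset.sum_le_sum (fun i _ => hterm i)
      _ = (∑ i : Fin n, (d.1 ^ 2 + d.2 ^ 2) * f i ^ 4 / 4) / m ^ 2 := by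
          rw [Finset.sum_div]
          apply Finset.sum_congr rfl
          intro i _
          field_simp
      _ ≤ B / m ^ 2 := by
          gcongr
          linarith [hB]
      _ < ε := by
          rw [div_lt_iff₀ (by positivity)]
          have h1 : B < ε * m := by
            rw [div_lt_iff₀ hε] at hmB
            linarith [hmB]
          have h2 : ε * m ≤ ε * m ^ 2 := by
            have : m ≤ m ^ 2 := by nlinarith
            exact mul_le_mul_of_nonneg_left this hε.le
          linarith
  refine ⟨hpos, ⟨?_, ?_⟩, ?_⟩
  · rintro s ⟨a, b, R, hR, rfl⟩
    exact (hpos a b R hR).le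
  · intro c hc
    by_contra h
    push_neg at h
    obtain ⟨s, hsS, hs⟩ := hsmall c h
    exact absurd (hc hsS) (not_le.2 hs)
  · rintro ⟨a, b, R, hR, hmin⟩
    have hlb : F a b R ∈ lowerBounds S := by
      rintro s ⟨a', b', R', hR', rfl⟩
      exact hmin a' b' R' hR'
    have h1 : F a b R ≤ 0 := by
      by_contra h
      push_neg at h
      obtain ⟨s, hsS, hs⟩ := hsmall _ h
      exact absurd (hlb hsS) (not_le.2 hs)
    exact absurd (hpos a b R hR) (not_lt.2 h1)
end
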